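/- arXiv:2007.09232 — 2 statements merged into one kernel-verified Lean document; each statement's English description precedes it below -/
import Mathlib

section
/- Suppose cos(α+θ) ≠ 0, cos(α+2θ) ≠ 0, cos(α+3θ) ≠ 0, sin(α+3θ) ≠ 0, tan(α+θ) ≠ tan(α+3θ), and additionally |tan(α+θ)·cot(α+3θ)| < 1. Then the fixed point x_FP = ℓ·(tan(α+θ) − tan(α+2θ))/(tan(α+θ) − tan(α+3θ)) of the three-bounce return map is globally attracting: for every initial condition x₀ ∈ ℝ, the orbit x_{n+1} = F(x_n) converges to x_FP as n → ∞. This establishes that the limit-cycle trajectory is robust to perturbations of the impact point on the object. -/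
open Real Filter

/-- The three-bounce return map of the bouncing robot. -/
noncomputable def bounceMap (ℓ α θ x : ℝ) : ℝ :=
  ((ℓ - x) * Real.tan (π - θ - α) + ℓ * Real.cot (3 * π / 2 - 2 * θ - α)) *
    Real.tan (3 * π / 2 - α - 3 * θ)

lemma cot_three_pi_div_two_sub (u : ℝ) : Real.cot (3*π/2 - u) = Real.tan u := by
  rw [show 3*π/2 - u = π + (π/2 - u) by ring, Real.cot_eq_cos_div_sin, Real.tan_eq_sin_div_cos]
  simp [Real.cos_add, Real.sin_add, Real.cos_sub, Real.sin_sub, neg_div_neg_eq]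

lemma tan_three_pi_div_two_sub (v : ℝ) : Real.tan (3*π/2 - v) = Real.cot v := by
  rw [show 3*π/2 - v = π + (π/2 - v) by ring, Real.tan_eq_sin_div_cos, Real.cot_eq_cos_div_sin]
  simp [Real.cos_add, Real.sin_add, Real.cos_sub, Real.sin_sub, neg_div_neg_eq]

lemma bounceMap_affine (ℓ α θ x : ℝ) :
    bounceMap ℓ α θ x =
      (Real.tan (α + θ) * Real.cot (α + 3 * θ)) * x +
        ℓ * (Real.tan (α + 2 * θ) - Real.tan (α + θ)) * Real.cot (α + 3 * θ) := by
  unfold bounceMap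
  rw [show π - θ - α = π - (α + θ) by ring, Real.tan_pi_sub,
    show 3 * π / 2 - 2 * θ - α = 3*π/2 - (α + 2*θ) by ring, cot_three_pi_div_two_sub,
    show 3 * π / 2 - α - 3 * θ = 3*π/2 - (α + 3*θ) by ring, tan_three_pi_div_two_sub]
  ring

theorem bounceMap_globally_attracting (ℓ α θ : ℝ)
    (h1 : Real.cos (α + θ) ≠ 0) (h2 : Real.cos (α + 2 * θ) ≠ 0)
    (h3 : Real.cos (α + 3 * θ) ≠ 0) (h4 : Real.sin (α + 3 * θ) ≠ 0)
    (h5 : Real.tan (α + θ) ≠ Real.tan (α + 3 * θ))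
    (hJ : |Real.tan (α + θ) * Real.cot (α + 3 * θ)| < 1)
    (x : ℕ → ℝ) (hx : ∀ n : ℕ, x (n + 1) = bounceMap ℓ α θ (x n)) :
    Tendsto x atTop (nhds
      (ℓ * (Real.tan (α + θ) - Real.tan (α + 2 * θ)) /
        (Real.tan (α + θ) - Real.tan (α + 3 * θ)))) := by
  set a : ℝ := Real.tan (α + θ) * Real.cot (α + 3 * θ) with ha
  set b : ℝ := ℓ * (Real.tan (α + 2 * θ) - Real.tan (α + θ)) * Real.cot (α + 3 * θ) with hb
  set p : ℝ := ℓ * (Real.tan (α + θ) - Real.tan (α + 2 * θ)) /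
        (Real.tan (α + θ) - Real.tan (α + 3 * θ)) with hp
  have hsub : Real.tan (α + θ) - Real.tan (α + 3 * θ) ≠ 0 := sub_ne_zero.mpr h5
  have hsub' : Real.tan (α + θ) * Real.cos (α + 3 * θ) - Real.sin (α + 3 * θ) ≠ 0 := by
    have he : Real.tan (α + θ) * Real.cos (α + 3 * θ) - Real.sin (α + 3 * θ) =
        (Real.tan (α + θ) - Real.tan (α + 3 * θ)) * Real.cos (α + 3 * θ) := by
      rw [Real.tan_eq_sin_div_cos (α + 3 * θ), sub_mul, div_mul_cancel₀ _ h3]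
    rw [he]; exact mul_ne_zero hsub h3
  have hfix : a * p + b = p := by
    rw [ha, hb, hp, Real.cot_eq_cos_div_sin, Real.tan_eq_sin_div_cos (α + 3 * θ)]
    rw [show Real.tan (α + θ) - Real.sin (α + 3 * θ) / Real.cos (α + 3 * θ) =
        (Real.tan (α + θ) * Real.cos (α + 3 * θ) - Real.sin (α + 3 * θ)) / Real.cos (α + 3 * θ)
        by rw [sub_div, mul_div_cancel_right₀ _ h3]]
    generalize Real.cos (α + 3 * θ) = c at h3 hsub' ⊢
    generalize Real.sin (α + 3 * θ) = s at h4 hsub' ⊢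
    field_simp
    ring
  have key : ∀ n, x n - p = a ^ n * (x 0 - p) := by
    intro n
    induction n with
    | zero => simp
    | succ n ih =>
      rw [hx n, bounceMap_affine, ← ha, ← hb]
      calc a * x n + b - p = a * (x n - p) + (a * p + b - p) := by ring
        _ = a ^ (n+1) * (x 0 - p) := by rw [hfix, ih]; ring
  have hlim : Tendsto (fun n => a ^ n * (x 0 - p) + p) atTop (nhds p) := by
    have h0 : Tendsto (fun n => a ^ n) atTop (nhds 0) :=
      tendsto_pow_atTop_nhds_zero_of_abs_lt_one hJ
    have := (h0.mul_const (x 0 - p)).add_const p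
    simpa using this
  refine hlim.congr (fun n => ?_)
  have := key n
  linarith
end

section
/- Specializing the rotation angle to θ = π/3: for all real ℓ and α, the derivative of the three-bounce return map F (with θ = π/3) at every point equals tan(α+π/3)·cot α, using the identity cot(α+π) = cot α. -/
open Real

lemma cot_eq_inv_tan (x : ℝ) : Real.cot x = (Real.tan x)⁻¹ := by
  rw [Real.cot_eq_cos_div_sin, Real.tan_eq_sin_div_cos, inv_div]

theorem bounceMap_deriv_equiangular (ℓ α : ℝ) :
    ∀ x : ℝ, deriv (bounceMap ℓ α (π / 3)) x =
      Real.tan (α + π / 3) * Real.cot α := by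
  intro x
  set A := Real.tan (π - π / 3 - α) with hA
  set B := ℓ * Real.cot (3 * π / 2 - 2 * (π / 3) - α) with hB
  set C := Real.tan (3 * π / 2 - α - 3 * (π / 3)) with hC
  have h : HasDerivAt (bounceMap ℓ α (π / 3)) (-1 * A * C) x := by
    have := ((((hasDerivAt_id x).const_sub ℓ).mul_const A).add_const B).mul_const C
    rw [show bounceMap ℓ α (π / 3) = fun y => ((ℓ - y) * A + B) * C from rfl]
    simpa [bounceMap, hA, hB, hC] using this
  rw [h.deriv]
  have h1 : A = -Real.tan (α + π / 3) := by
    rw [hA, show π - π / 3 - α = π - (α + π / 3) by ring, Real.tan_pi_sub]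
  have h2 : C = Real.cot α := by
    rw [hC, show 3 * π / 2 - α - 3 * (π / 3) = π / 2 - α by ring,
      Real.tan_pi_div_two_sub, cot_eq_inv_tan]
  rw [h1, h2]; ring
end
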